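/- arXiv:math/0606060 — 2 statements merged into one kernel-verified Lean document; each statement's English description precedes it below -/
import Mathlib

section
/- Let μ, ν be compactly supported regular Borel measures on ℝⁿ with μ ≺ ν in the decomposition sense: for every finite decomposition μ = Σᵢ μᵢ into positive measures there exist positive measures νᵢ with Σᵢ νᵢ = ν, νᵢ(1) = μᵢ(1), and νᵢ(πⱼ) = μᵢ(πⱼ) for all i, j. Then μ(f) ≤ ν(f) for every continuous convex function f : ℝⁿ → ℝ. -/
open MeasureTheory

/-- A continuous function is integrable w.r.t. a finite measure vanishing outside a
compact set. -/
lemma aux_integrable_of_compact {n : ℕ} (ρ : Measure (EuclideanSpace ℝ (Fin n)))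
    [IsFiniteMeasure ρ] {K : Set (EuclideanSpace ℝ (Fin n))} (hK : IsCompact K)
    (hρ : ρ Kᶜ = 0) {F : Type*} [NormedAddCommGroup F]
    {h : EuclideanSpace ℝ (Fin n) → F} (hh : Continuous h) : Integrable h ρ := by
  obtain ⟨C, hC⟩ := hK.exists_bound_of_continuousOn hh.continuousOn
  refine ⟨hh.aestronglyMeasurable, HasFiniteIntegral.of_bounded (C := C) ?_⟩
  have hmem : ∀ᵐ x ∂ρ, x ∈ K := by
    rw [MeasureTheory.ae_iff]
    exact hρ
  exact hmem.mono fun x hx => hC x hx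

/-- If `μ ≺ ν` in the decomposition sense (every finite decomposition of `μ` can be
matched by a decomposition of `ν` with the same masses and barycenter coordinates),
then `∫ f dμ ≤ ∫ f dν` for every continuous convex `f : ℝⁿ → ℝ`. -/
theorem decomposition_majorization_implies_convex_inequality {n : ℕ}
    (μ ν : Measure (EuclideanSpace ℝ (Fin n)))
    [IsFiniteMeasure μ] [IsFiniteMeasure ν] [μ.Regular] [ν.Regular]
    (hμc : ∃ K, IsCompact K ∧ μ Kᶜ = 0) (hνc : ∃ K, IsCompact K ∧ ν Kᶜ = 0)
    (hmaj : ∀ (m : ℕ) (μs : Fin m → Measure (EuclideanSpace ℝ (Fin n))),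
      (∑ i, μs i) = μ →
      ∃ νs : Fin m → Measure (EuclideanSpace ℝ (Fin n)),
        (∑ i, νs i) = ν ∧
        ∀ i, νs i Set.univ = μs i Set.univ ∧
          ∀ j : Fin n, ∫ x, x j ∂(νs i) = ∫ x, x j ∂(μs i)) :
    ∀ f : EuclideanSpace ℝ (Fin n) → ℝ, Continuous f → ConvexOn ℝ Set.univ f →
      ∫ x, f x ∂μ ≤ ∫ x, f x ∂ν := by
  intro f hfc hfconv
  obtain ⟨K₀, hK₀c, hK₀μ⟩ := hμc
  obtain ⟨K₁, hK₁c, hK₁ν⟩ := hνc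
  obtain ⟨r₀, hr₀⟩ := hK₀c.isBounded.subset_closedBall (0 : EuclideanSpace ℝ (Fin n))
  obtain ⟨r₁, hr₁⟩ := hK₁c.isBounded.subset_closedBall (0 : EuclideanSpace ℝ (Fin n))
  set R : ℝ := max (max r₀ r₁) 0 with hR
  set K : Set (EuclideanSpace ℝ (Fin n)) := Metric.closedBall (0 : EuclideanSpace ℝ (Fin n)) R with hKdef
  have hKc : IsCompact K := isCompact_closedBall _ _
  have hKcl : IsClosed K := Metric.isClosed_closedBall
  have hKconv : Convex ℝ K := convex_closedBall _ _
  have hKb : Bornology.IsBounded K := Metric.isBounded_closedBall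
  have hK₀K : K₀ ⊆ K :=
    hr₀.trans (Metric.closedBall_subset_closedBall ((le_max_left _ _).trans (le_max_left _ _)))
  have hK₁K : K₁ ⊆ K :=
    hr₁.trans (Metric.closedBall_subset_closedBall ((le_max_right _ _).trans (le_max_left _ _)))
  have hμK : μ Kᶜ = 0 :=
    measure_mono_null (Set.compl_subset_compl.2 hK₀K) hK₀μ
  have hνK : ν Kᶜ = 0 :=
    measure_mono_null (Set.compl_subset_compl.2 hK₁K) hK₁ν
  -- reduce to an ε-approximation
  refine le_of_forall_pos_le_add ?_
  intro ε hε
  set M : ℝ := (μ Set.univ).toReal with hM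
  have hM0 : 0 ≤ M := ENNReal.toReal_nonneg
  set ε' : ℝ := ε / (M + 1) with hε'def
  have hε' : 0 < ε' := div_pos hε (by linarith)
  -- uniform continuity of f on K
  have hfu := (hKc.uniformContinuousOn_of_continuous hfc.continuousOn)
  rw [Metric.uniformContinuousOn_iff] at hfu
  obtain ⟨δ, hδ, hδf⟩ := hfu ε' hε'
  set r : ℝ := δ / 4 with hrdef
  have hr : 0 < r := by positivity
  -- finite cover of K by balls of radius r
  obtain ⟨t, ht⟩ := hKc.elim_finite_subcover (fun x : EuclideanSpace ℝ (Fin n) => Metric.ball x r)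
    (fun x => Metric.isOpen_ball) (fun x hx => Set.mem_iUnion.2 ⟨x, Metric.mem_ball_self hr⟩)
  set m : ℕ := t.card with hm
  set c : Fin m → EuclideanSpace ℝ (Fin n) := fun i => (t.equivFin.symm i : EuclideanSpace ℝ (Fin n)) with hc
  -- pieces of a partition of K
  set B : ℕ → Set (EuclideanSpace ℝ (Fin n)) := fun k => if h : k < m then K ∩ Metric.ball (c ⟨k, h⟩) r else ∅ with hB
  have hBsubK : ∀ k, B k ⊆ K := by
    intro k
    simp only [hB]
    split
    · exact Set.inter_subset_left
    · exact Set.empty_subset _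
  have hBmeas : ∀ k, MeasurableSet (B k) := by
    intro k
    simp only [hB]
    split
    · exact (measurableSet_closedBall).inter measurableSet_ball
    · exact MeasurableSet.empty
  have hBunion : (⋃ k, B k) = K := by
    apply Set.Subset.antisymm (Set.iUnion_subset hBsubK)
    intro x hx
    have := ht hx
    rw [Set.mem_iUnion₂] at this
    obtain ⟨y, hyt, hxy⟩ := this
    refine Set.mem_iUnion.2 ⟨(t.equivFin ⟨y, hyt⟩ : Fin m), ?_⟩
    have hlt : ((t.equivFin ⟨y, hyt⟩ : Fin m) : ℕ) < m := (t.equivFin ⟨y, hyt⟩).2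
    simp only [hB, dif_pos hlt]
    refine ⟨hx, ?_⟩
    have : c ⟨(t.equivFin ⟨y, hyt⟩ : Fin m), hlt⟩ = y := by
      simp only [hc, Fin.eta, Equiv.symm_apply_apply]
    rw [this]
    exact hxy
  set S : Fin m → Set (EuclideanSpace ℝ (Fin n)) := fun i => disjointed B i with hS
  have hSsub : ∀ i : Fin m, S i ⊆ B i := fun i => disjointed_subset B i
  have hSmeas : ∀ i : Fin m, MeasurableSet (S i) :=
    fun i => MeasurableSet.disjointed hBmeas i
  have hSdisj : ∀ (i k : Fin m), i ≠ k → Disjoint (S i) (S k) := by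
    intro i k hik
    exact disjoint_disjointed B (fun h => hik (Fin.ext h))
  have hSunion : (⋃ i : Fin m, S i) = K := by
    apply Set.Subset.antisymm (Set.iUnion_subset fun i => (hSsub i).trans (hBsubK i))
    intro x hx
    have hxU : x ∈ ⋃ k, disjointed B k :=
      ((iUnion_disjointed (f := B)).trans hBunion).ge hx
    rw [Set.mem_iUnion] at hxU
    obtain ⟨k, hk⟩ := hxU
    have hkm : k < m := by
      by_contra h
      have hBk : B k = ∅ := by simp only [hB, dif_neg h]
      have := disjointed_subset B k hk
      rw [hBk] at this
      exact this
    exact Set.mem_iUnion.2 ⟨⟨k, hkm⟩, hk⟩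
  -- the decomposition of μ
  set μs : Fin m → Measure (EuclideanSpace ℝ (Fin n)) := fun i => μ.restrict (S i) with hμs
  have hsum : (∑ i, μs i) = μ := by
    ext s hs
    rw [Measure.finset_sum_apply]
    have h1 : ∀ i : Fin m, μs i s = μ (s ∩ S i) := fun i =>
      Measure.restrict_apply hs
    simp_rw [h1]
    rw [← measure_biUnion_finset (fun i _ k _ hik => (hSdisj i k hik).mono
        Set.inter_subset_right Set.inter_subset_right)
      (fun i _ => hs.inter (hSmeas i))]
    have : (⋃ i ∈ Finset.univ, s ∩ S i) = s ∩ K := by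
      rw [← hSunion]
      simp [Set.inter_iUnion]
    rw [this, measure_inter_conull hμK]
  obtain ⟨νs, hνsum, hνprop⟩ := hmaj m μs hsum
  -- basic facts about the pieces
  have hνle : ∀ i, νs i ≤ ν := by
    intro i
    refine Measure.le_iff'.2 fun s => ?_
    rw [← hνsum, Measure.finset_sum_apply]
    exact Finset.single_le_sum (f := fun k => νs k s) (fun k _ => zero_le)
      (Finset.mem_univ i)
  haveI : ∀ i, IsFiniteMeasure (νs i) := fun i => isFiniteMeasure_of_le ν (hνle i)
  have hνsK : ∀ i, νs i Kᶜ = 0 := fun i =>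
    le_antisymm (le_trans (Measure.le_iff'.1 (hνle i) Kᶜ) hνK.le) zero_le
  have hμsK : ∀ i, μs i Kᶜ = 0 := fun i =>
    le_antisymm (le_trans (Measure.le_iff'.1 Measure.restrict_le_self Kᶜ) hμK.le) zero_le
  have hμf : ∀ i, Integrable f (μs i) := fun i =>
    aux_integrable_of_compact _ hKc (hμsK i) hfc
  have hνf : ∀ i, Integrable f (νs i) := fun i =>
    aux_integrable_of_compact _ hKc (hνsK i) hfc
  have hμid : ∀ i, Integrable (fun x : EuclideanSpace ℝ (Fin n) => x) (μs i) := fun i =>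
    aux_integrable_of_compact _ hKc (hμsK i) continuous_id
  have hνid : ∀ i, Integrable (fun x : EuclideanSpace ℝ (Fin n) => x) (νs i) := fun i =>
    aux_integrable_of_compact _ hKc (hνsK i) continuous_id
  -- the key per-piece inequality
  have key : ∀ i : Fin m,
      ∫ x, f x ∂(μs i) ≤ ∫ x, f x ∂(νs i) + ε' * (μs i Set.univ).toReal := by
    intro i
    rcases eq_or_ne (μs i Set.univ) 0 with h0 | h0
    · have hμ0 : μs i = 0 := Measure.measure_univ_eq_zero.1 h0
      have hν0 : νs i = 0 := Measure.measure_univ_eq_zero.1 ((hνprop i).1.trans h0)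
      simp [hμ0, hν0]
    · haveI : NeZero (μs i) := ⟨fun h => h0 (by simp [h])⟩
      haveI : NeZero (νs i) := ⟨fun h => h0 (by rw [← (hνprop i).1, h]; simp)⟩
      set mi : ℝ := (μs i Set.univ).toReal with hmi
      have hmi0 : 0 < mi := ENNReal.toReal_pos h0 (measure_ne_top _ _)
      set b : EuclideanSpace ℝ (Fin n) := ⨍ x, x ∂(μs i) with hb
      -- the barycenter lies in the closed convex hull of `S i`
      have hae : ∀ᵐ x ∂(μs i), x ∈ S i := ae_restrict_mem (hSmeas i)
      have hbmem : b ∈ closure (convexHull ℝ (S i)) := by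
        refine Convex.average_mem ((convex_convexHull ℝ _).closure) isClosed_closure
          (hae.mono fun x hx => subset_closure (subset_convexHull ℝ _ hx)) (hμid i)
      have hhullK : closure (convexHull ℝ (S i)) ⊆ K :=
        closure_minimal (convexHull_min ((hSsub i).trans (hBsubK i)) hKconv) hKcl
      have hbK : b ∈ K := hhullK hbmem
      -- points of `S i` are close to the barycenter
      have hclose : ∀ x ∈ S i, dist x b < δ := by
        intro x hx
        have hxhull : x ∈ closure (convexHull ℝ (S i)) :=
          subset_closure (subset_convexHull ℝ _ hx)
        have hbdd : Bornology.IsBounded (closure (convexHull ℝ (S i))) :=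
          (hKb.subset hhullK)
        have h1 : dist x b ≤ Metric.diam (closure (convexHull ℝ (S i))) :=
          Metric.dist_le_diam_of_mem hbdd hxhull hbmem
        have h2 : Metric.diam (closure (convexHull ℝ (S i))) = Metric.diam (S i) := by
          rw [Metric.diam_closure, convexHull_diam]
        have h3 : Metric.diam (S i) ≤ 2 * r := by
          have him : (i : ℕ) < m := i.isLt
          have hBi : S i ⊆ Metric.ball (c ⟨(i : ℕ), him⟩) r := by
            intro y hy
            have hyB := hSsub i hy
            simp only [hB, dif_pos him] at hyB
            exact hyB.2
          calc Metric.diam (S i) ≤ Metric.diam (Metric.ball (c ⟨(i : ℕ), him⟩) r) :=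
                Metric.diam_mono hBi Metric.isBounded_ball
            _ ≤ 2 * r := Metric.diam_ball hr.le
        have : 2 * r < δ := by rw [hrdef]; linarith
        linarith [h1, h2.le, h2.ge, h3]
      -- f is within ε' of f b on S i
      have hfb : ∀ᵐ x ∂(μs i), f x ≤ f b + ε' := by
        refine hae.mono fun x hx => ?_
        have hxK : x ∈ K := (hBsubK i) (hSsub i hx)
        have := hδf x hxK b hbK (hclose x hx)
        have := abs_lt.1 (by rwa [Real.dist_eq] at this)
        linarith [this.2]
      -- μ side: ∫ f dμs i ≤ mi * (f b + ε')
      have hμineq : ∫ x, f x ∂(μs i) ≤ mi * (f b + ε') := by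
        calc ∫ x, f x ∂(μs i) ≤ ∫ _, f b + ε' ∂(μs i) :=
              integral_mono_ae (hμf i) (integrable_const _) hfb
          _ = mi * (f b + ε') := by rw [integral_const, smul_eq_mul]; rfl
      -- the barycenters agree
      have hbν : (⨍ x, x ∂(νs i)) = b := by
        have hint : (∫ x, x ∂(νs i)) = ∫ x, x ∂(μs i) := by
          apply PiLp.ext
          intro j
          have h1 := (EuclideanSpace.proj j (𝕜 := ℝ)).integral_comp_comm (hνid i)
          have h2 := (EuclideanSpace.proj j (𝕜 := ℝ)).integral_comp_comm (hμid i)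
          simp only [EuclideanSpace.proj, PiLp.proj_apply] at h1 h2
          rw [← h1, ← h2]
          exact (hνprop i).2 j
        rw [hb, average_eq, average_eq, hint, measureReal_def, measureReal_def, (hνprop i).1]
      -- ν side: Jensen
      have hjensen : f b ≤ ⨍ x, f x ∂(νs i) := by
        rw [← hbν]
        exact hfconv.map_average_le hfc.continuousOn isClosed_univ
          (Filter.Eventually.of_forall fun x => Set.mem_univ x) (hνid i) (by exact hνf i)
      have hmass : (νs i Set.univ).toReal = mi := by rw [(hνprop i).1]
      have hνineq : mi * f b ≤ ∫ x, f x ∂(νs i) := by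
        have := mul_le_mul_of_nonneg_left hjensen hmi0.le
        rwa [average_eq, measureReal_def, hmass, smul_eq_mul, ← mul_assoc,
          mul_inv_cancel₀ hmi0.ne', one_mul] at this
      calc ∫ x, f x ∂(μs i) ≤ mi * (f b + ε') := hμineq
        _ = mi * f b + ε' * mi := by ring
        _ ≤ ∫ x, f x ∂(νs i) + ε' * mi := by linarith
  -- sum up
  have hμint : ∫ x, f x ∂μ = ∑ i, ∫ x, f x ∂(μs i) := by
    rw [← hsum, integral_finset_sum_measure fun i _ => hμf i]
  have hνint : ∫ x, f x ∂ν = ∑ i, ∫ x, f x ∂(νs i) := by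
    rw [← hνsum, integral_finset_sum_measure fun i _ => hνf i]
  have hmsum : ∑ i, (μs i Set.univ).toReal = M := by
    rw [hM, ← hsum, Measure.finset_sum_apply,
      ENNReal.toReal_sum fun i _ => measure_ne_top _ _]
  calc ∫ x, f x ∂μ = ∑ i, ∫ x, f x ∂(μs i) := hμint
    _ ≤ ∑ i, (∫ x, f x ∂(νs i) + ε' * (μs i Set.univ).toReal) :=
        Finset.sum_le_sum fun i _ => key i
    _ = ∫ x, f x ∂ν + ε' * M := by
        rw [Finset.sum_add_distrib, ← Finset.mul_sum, hmsum, hνint]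
    _ ≤ ∫ x, f x ∂ν + ε := by
        have : ε' * M ≤ ε := by
          rw [hε'def]
          rw [div_mul_eq_mul_div, div_le_iff₀ (by linarith)]
          nlinarith
        linarith
end

section
/- Let ν : L^∞(Y, μ_Y) → L^∞(X, μ_X) be a doubly stochastic kernel between compactly supported Borel probability spaces in ℝⁿ with ν(πⱼ) = πⱼ for 1 ≤ j ≤ n (as elements of L^∞). Then for every finite decomposition μ_X = Σⱼ λⱼ into positive measures, the measures λⱼ' defined by λⱼ'(Δ) = λⱼ(ν(1_Δ)) = ∫ ν(1_Δ) dλⱼ satisfy Σⱼ λⱼ' = μ_Y, λⱼ'(1) = λⱼ(1), and λⱼ'(πᵢ) = λⱼ(πᵢ) for all i, j. In particular μ_X ≺ μ_Y in the decomposition sense. -/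
open MeasureTheory Filter Topology
open scoped ENNReal NNReal

namespace DSKaux

variable {α : Type*} [MeasurableSpace α] {μX μY : Measure α}
  [IsProbabilityMeasure μX] [IsProbabilityMeasure μY]

noncomputable def ind (μ : Measure α) [IsFiniteMeasure μ] {s : Set α}
    (hs : MeasurableSet s) : Lp ℝ ⊤ μ :=
  indicatorConstLp ⊤ hs (measure_ne_top μ s) (1 : ℝ)

lemma ind_coe (μ : Measure α) [IsFiniteMeasure μ] {s : Set α} (hs : MeasurableSet s) :
    ⇑(ind μ hs) =ᵐ[μ] s.indicator (fun _ => (1 : ℝ)) :=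
  indicatorConstLp_coeFn

lemma ind_nonneg (μ : Measure α) [IsFiniteMeasure μ] {s : Set α} (hs : MeasurableSet s) :
    ∀ᵐ y ∂μ, 0 ≤ ind μ hs y :=
  (ind_coe μ hs).mono fun y hy => by
    rw [hy]; exact Set.indicator_nonneg (fun _ _ => zero_le_one) y

variable (ν : Lp ℝ ⊤ μY →ₗ[ℝ] Lp ℝ ⊤ μX)

/-- The kernel set-function. -/
noncomputable def ker (lam : Measure α) {s : Set α} (hs : MeasurableSet s) : ℝ≥0∞ :=
  ∫⁻ x, ENNReal.ofReal (ν (ind μY hs) x) ∂lam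

section basic

variable {lam : Measure α}

lemma nu_ind_nonneg
    (hpos : ∀ f : Lp ℝ ⊤ μY, (∀ᵐ y ∂μY, 0 ≤ f y) → ∀ᵐ x ∂μX, 0 ≤ ν f x)
    {s : Set α} (hs : MeasurableSet s) :
    ∀ᵐ x ∂μX, 0 ≤ ν (ind μY hs) x :=
  hpos _ (ind_nonneg μY hs)

lemma ae_of_ae_muX (hlam : lam ≤ μX) {p : α → Prop} (h : ∀ᵐ x ∂μX, p x) :
    ∀ᵐ x ∂lam, p x :=
  h.filter_mono (Measure.absolutelyContinuous_of_le hlam).ae_le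

lemma integrable_nu (hlam : lam ≤ μX) (f : Lp ℝ ⊤ μY) : Integrable (⇑(ν f)) lam := by
  haveI : IsFiniteMeasure lam := isFiniteMeasure_of_le μX hlam
  exact ((Lp.memLp (ν f)).integrable le_top).mono_measure hlam

lemma ker_eq_ofReal
    (hpos : ∀ f : Lp ℝ ⊤ μY, (∀ᵐ y ∂μY, 0 ≤ f y) → ∀ᵐ x ∂μX, 0 ≤ ν f x)
    (hlam : lam ≤ μX) {s : Set α} (hs : MeasurableSet s) :
    ker ν lam hs = ENNReal.ofReal (∫ x, ν (ind μY hs) x ∂lam) :=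
  (ofReal_integral_eq_lintegral_ofReal (integrable_nu ν hlam _)
    (ae_of_ae_muX hlam (nu_ind_nonneg ν hpos hs))).symm

lemma ker_muX
    (hpos : ∀ f : Lp ℝ ⊤ μY, (∀ᵐ y ∂μY, 0 ≤ f y) → ∀ᵐ x ∂μX, 0 ≤ ν f x)
    (hmass : ∀ Δ : Set α, MeasurableSet Δ →
      ∀ f : Lp ℝ ⊤ μY, ((f : _ → ℝ) =ᵐ[μY] Δ.indicator 1) →
      ∫ x, ν f x ∂μX = (μY Δ).toReal)
    {s : Set α} (hs : MeasurableSet s) : ker ν μX hs = μY s := by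
  rw [ker_eq_ofReal ν hpos le_rfl hs, hmass s hs (ind μY hs) (ind_coe μY hs),
    ENNReal.ofReal_toReal (measure_ne_top _ _)]

lemma ker_le_muY
    (hpos : ∀ f : Lp ℝ ⊤ μY, (∀ᵐ y ∂μY, 0 ≤ f y) → ∀ᵐ x ∂μX, 0 ≤ ν f x)
    (hmass : ∀ Δ : Set α, MeasurableSet Δ →
      ∀ f : Lp ℝ ⊤ μY, ((f : _ → ℝ) =ᵐ[μY] Δ.indicator 1) →
      ∫ x, ν f x ∂μX = (μY Δ).toReal)
    (hlam : lam ≤ μX) {s : Set α} (hs : MeasurableSet s) : ker ν lam hs ≤ μY s :=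
  le_trans (lintegral_mono' hlam le_rfl) (le_of_eq (ker_muX ν hpos hmass hs))

lemma ker_congr {s t : Set α} (hs : MeasurableSet s) (h : s = t) :
    ker ν lam hs = ker ν lam (h ▸ hs) := by subst h; rfl

lemma ind_union {s t : Set α} (hs : MeasurableSet s) (ht : MeasurableSet t)
    (hd : Disjoint s t) :
    ind μY (hs.union ht) = ind μY hs + ind μY ht := by
  apply Lp.ext
  filter_upwards [ind_coe μY (hs.union ht), ind_coe μY hs, ind_coe μY ht,
    Lp.coeFn_add (ind μY hs) (ind μY ht)] with y h1 h2 h3 h4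
  rw [h1, h4, Pi.add_apply, h2, h3, Set.indicator_union_of_disjoint hd]

lemma aemeas_ofReal_nu (hlam : lam ≤ μX) (f : Lp ℝ ⊤ μY) :
    AEMeasurable (fun x => ENNReal.ofReal (ν f x)) lam :=
  ((Lp.aestronglyMeasurable (ν f)).mono_measure hlam).aemeasurable.ennreal_ofReal

lemma ker_union
    (hpos : ∀ f : Lp ℝ ⊤ μY, (∀ᵐ y ∂μY, 0 ≤ f y) → ∀ᵐ x ∂μX, 0 ≤ ν f x)
    (hlam : lam ≤ μX) {s t : Set α} (hs : MeasurableSet s) (ht : MeasurableSet t)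
    (hd : Disjoint s t) :
    ker ν lam (hs.union ht) = ker ν lam hs + ker ν lam ht := by
  have hcong : (fun x => ENNReal.ofReal (ν (ind μY (hs.union ht)) x)) =ᵐ[lam]
      fun x => ENNReal.ofReal (ν (ind μY hs) x) + ENNReal.ofReal (ν (ind μY ht) x) := by
    have h0 : ind μY (hs.union ht) = ind μY hs + ind μY ht := ind_union hs ht hd
    have hadd : ⇑(ν (ind μY hs) + ν (ind μY ht)) =ᵐ[μX]
        ⇑(ν (ind μY hs)) + ⇑(ν (ind μY ht)) := Lp.coeFn_add _ _
    filter_upwards [ae_of_ae_muX hlam hadd,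
      ae_of_ae_muX hlam (nu_ind_nonneg ν hpos hs),
      ae_of_ae_muX hlam (nu_ind_nonneg ν hpos ht)] with x h1 h2 h3
    rw [h0, map_add, h1, Pi.add_apply, ENNReal.ofReal_add h2 h3]
  rw [ker, lintegral_congr_ae hcong,
    lintegral_add_left' (aemeas_ofReal_nu ν hlam _) _]
  rfl

lemma ker_empty (hlam : lam ≤ μX) : ker ν lam (MeasurableSet.empty) = 0 := by
  have h0 : ind μY (MeasurableSet.empty : MeasurableSet (∅ : Set α)) = 0 := by
    apply Lp.ext
    filter_upwards [ind_coe μY (MeasurableSet.empty : MeasurableSet (∅ : Set α)),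
      Lp.coeFn_zero ℝ ⊤ μY] with y h1 h2
    rw [h1, h2]; simp
  have h : (fun x => ENNReal.ofReal (ν (ind μY (MeasurableSet.empty :
      MeasurableSet (∅ : Set α))) x)) =ᵐ[lam] fun _ => 0 := by
    filter_upwards [ae_of_ae_muX hlam
      (Lp.coeFn_zero ℝ ⊤ μX : ⇑(0 : Lp ℝ ⊤ μX) =ᵐ[μX] 0)] with x h1
    rw [h0, map_zero, h1]; simp
  rw [ker, lintegral_congr_ae h, lintegral_zero]

lemma ker_mono
    (hpos : ∀ f : Lp ℝ ⊤ μY, (∀ᵐ y ∂μY, 0 ≤ f y) → ∀ᵐ x ∂μX, 0 ≤ ν f x)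
    (hlam : lam ≤ μX) {s t : Set α} (hs : MeasurableSet s) (ht : MeasurableSet t)
    (hsub : s ⊆ t) : ker ν lam hs ≤ ker ν lam ht := by
  have h1 : ker ν lam (hs.union (ht.diff hs)) = ker ν lam hs + ker ν lam (ht.diff hs) :=
    ker_union ν hpos hlam hs (ht.diff hs) disjoint_sdiff_self_right
  have h2 : s ∪ (t \ s) = t := Set.union_diff_cancel hsub
  calc ker ν lam hs ≤ ker ν lam hs + ker ν lam (ht.diff hs) := le_self_add
    _ = ker ν lam (hs.union (ht.diff hs)) := h1.symm
    _ = ker ν lam ht := by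
        rw [ker_congr ν (hs.union (ht.diff hs)) h2]


lemma ker_congr' {s t : Set α} (hs : MeasurableSet s) (ht : MeasurableSet t)
    (h : s = t) : ker ν lam hs = ker ν lam ht := by subst h; rfl

lemma ker_iUnion
    (hpos : ∀ f : Lp ℝ ⊤ μY, (∀ᵐ y ∂μY, 0 ≤ f y) → ∀ᵐ x ∂μX, 0 ≤ ν f x)
    (hmass : ∀ Δ : Set α, MeasurableSet Δ →
      ∀ f : Lp ℝ ⊤ μY, ((f : _ → ℝ) =ᵐ[μY] Δ.indicator 1) →
      ∫ x, ν f x ∂μX = (μY Δ).toReal)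
    (hlam : lam ≤ μX)
    (f : ℕ → Set α) (hf : ∀ k, MeasurableSet (f k)) (hd : Pairwise (Function.onFun Disjoint f)) :
    ker ν lam (MeasurableSet.iUnion hf) = ∑' k, ker ν lam (hf k) := by
  set s : Set α := ⋃ k, f k with hsdef
  have hsm : MeasurableSet s := MeasurableSet.iUnion hf
  set S : ℕ → Set α := fun N => ⋃ k ∈ Finset.range N, f k with hSdef
  have hSm : ∀ N, MeasurableSet (S N) := fun N =>
    (Finset.range N).measurableSet_biUnion (fun k _ => hf k)
  have hsub : ∀ N, S N ⊆ s := fun N =>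
    Set.iUnion₂_subset fun k _ => Set.subset_iUnion f k
  have hSmono : Monotone S := fun N M hNM =>
    Set.biUnion_subset_biUnion_left (Finset.range_subset_range.2 hNM)
  have hSsucc : ∀ N, S (N + 1) = S N ∪ f N := by
    intro N
    ext x
    simp only [hSdef, Set.mem_iUnion, Finset.mem_range, Set.mem_union,
      Nat.lt_succ_iff_lt_or_eq, exists_prop]
    constructor
    · rintro ⟨k, hk | rfl, hx⟩
      · exact Or.inl ⟨k, hk, hx⟩
      · exact Or.inr hx
    · rintro (⟨k, hk, hx⟩ | hx)
      · exact ⟨k, Or.inl hk, hx⟩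
      · exact ⟨N, Or.inr rfl, hx⟩
  have hdisj : ∀ N, Disjoint (S N) (f N) := by
    intro N
    rw [Set.disjoint_iUnion_left]
    intro k
    rw [Set.disjoint_iUnion_left]
    intro hk
    exact hd (Nat.ne_of_lt (Finset.mem_range.1 hk))
  have hfin : ∀ N, ker ν lam (hSm N) = ∑ k ∈ Finset.range N, ker ν lam (hf k) := by
    intro N
    induction N with
    | zero =>
        rw [Finset.sum_range_zero]
        have h0 : S 0 = ∅ := by simp [hSdef]
        rw [ker_congr' ν (hSm 0) MeasurableSet.empty h0]
        exact ker_empty ν hlam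
    | succ N ih =>
        rw [Finset.sum_range_succ, ← ih,
          ker_congr' ν (hSm (N + 1)) ((hSm N).union (hf N)) (hSsucc N)]
        exact ker_union ν hpos hlam (hSm N) (hf N) (hdisj N)
  have htsum : ∑' k, ker ν lam (hf k) = ⨆ N, ker ν lam (hSm N) := by
    rw [ENNReal.tsum_eq_iSup_nat]
    exact iSup_congr fun N => (hfin N).symm
  rw [htsum]
  refine le_antisymm ?_ (iSup_le fun N => ker_mono ν hpos hlam (hSm N) hsm (hsub N))
  have hdiff : ∀ N, ker ν lam hsm =
      ker ν lam (hSm N) + ker ν lam (hsm.diff (hSm N)) := by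
    intro N
    rw [← ker_union ν hpos hlam (hSm N) (hsm.diff (hSm N)) disjoint_sdiff_self_right]
    exact ker_congr' ν hsm ((hSm N).union (hsm.diff (hSm N)))
      (Set.union_diff_cancel (hsub N)).symm
  have hbound : ∀ N, ker ν lam hsm ≤ (⨆ M, ker ν lam (hSm M)) + μY (s \ S N) := by
    intro N
    rw [hdiff N]
    exact add_le_add (le_iSup (fun M => ker ν lam (hSm M)) N)
      (ker_le_muY ν hpos hmass hlam _)
  have hempty : ⋂ N, (s \ S N) = ∅ := by
    rw [Set.eq_empty_iff_forall_notMem]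
    intro x hx
    simp only [Set.mem_iInter, Set.mem_diff] at hx
    obtain ⟨k, hk⟩ := Set.mem_iUnion.1 (hx 0).1
    exact (hx (k + 1)).2 (Set.mem_biUnion (Finset.self_mem_range_succ k) hk)
  have htend : Tendsto (fun N => μY (s \ S N)) atTop (𝓝 0) := by
    have h1 := tendsto_measure_iInter_atTop (μ := μY)
      (fun N => (hsm.diff (hSm N)).nullMeasurableSet)
      (fun N M hNM => Set.diff_subset_diff_right (hSmono hNM))
      ⟨0, measure_ne_top μY _⟩
    rw [hempty, measure_empty] at h1
    exact h1
  have hlim : Tendsto (fun N => (⨆ M, ker ν lam (hSm M)) + μY (s \ S N)) atTop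
      (𝓝 ((⨆ M, ker ν lam (hSm M)) + 0)) := Tendsto.const_add _ htend
  rw [add_zero] at hlim
  exact ge_of_tendsto hlim (Eventually.of_forall hbound)

/-- The kernel measure. -/
noncomputable def kerM
    (hpos : ∀ f : Lp ℝ ⊤ μY, (∀ᵐ y ∂μY, 0 ≤ f y) → ∀ᵐ x ∂μX, 0 ≤ ν f x)
    (hmass : ∀ Δ : Set α, MeasurableSet Δ →
      ∀ f : Lp ℝ ⊤ μY, ((f : _ → ℝ) =ᵐ[μY] Δ.indicator 1) →
      ∫ x, ν f x ∂μX = (μY Δ).toReal)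
    (hlam : lam ≤ μX) : Measure α :=
  Measure.ofMeasurable (fun s hs => ker ν lam hs) (ker_empty ν hlam)
    (fun f hf hd => ker_iUnion ν hpos hmass hlam f hf hd)

lemma kerM_apply
    (hpos : ∀ f : Lp ℝ ⊤ μY, (∀ᵐ y ∂μY, 0 ≤ f y) → ∀ᵐ x ∂μX, 0 ≤ ν f x)
    (hmass : ∀ Δ : Set α, MeasurableSet Δ →
      ∀ f : Lp ℝ ⊤ μY, ((f : _ → ℝ) =ᵐ[μY] Δ.indicator 1) →
      ∫ x, ν f x ∂μX = (μY Δ).toReal)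
    (hlam : lam ≤ μX) {s : Set α} (hs : MeasurableSet s) :
    kerM ν hpos hmass hlam s = ker ν lam hs :=
  Measure.ofMeasurable_apply s hs

lemma kerM_le
    (hpos : ∀ f : Lp ℝ ⊤ μY, (∀ᵐ y ∂μY, 0 ≤ f y) → ∀ᵐ x ∂μX, 0 ≤ ν f x)
    (hmass : ∀ Δ : Set α, MeasurableSet Δ →
      ∀ f : Lp ℝ ⊤ μY, ((f : _ → ℝ) =ᵐ[μY] Δ.indicator 1) →
      ∫ x, ν f x ∂μX = (μY Δ).toReal)
    (hlam : lam ≤ μX) : kerM ν hpos hmass hlam ≤ μY :=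
  Measure.le_iff.2 fun s hs => by
    rw [kerM_apply ν hpos hmass hlam hs]
    exact ker_le_muY ν hpos hmass hlam hs


lemma nu_abs_le
    (hpos : ∀ f : Lp ℝ ⊤ μY, (∀ᵐ y ∂μY, 0 ≤ f y) → ∀ᵐ x ∂μX, 0 ≤ ν f x)
    (hunit : ∀ f : Lp ℝ ⊤ μY, ((f : _ → ℝ) =ᵐ[μY] fun _ => 1) →
      ((ν f : _ → ℝ) =ᵐ[μX] fun _ => 1))
    (f : Lp ℝ ⊤ μY) {c : ℝ} (hf : ∀ᵐ y ∂μY, |f y| ≤ c) :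
    ∀ᵐ x ∂μX, |ν f x| ≤ c := by
  set one : Lp ℝ ⊤ μY := ind μY MeasurableSet.univ with hone_def
  have hone : ⇑one =ᵐ[μY] fun _ => (1 : ℝ) := by
    refine (ind_coe μY MeasurableSet.univ).trans ?_
    rw [Set.indicator_univ]
  have hν1 : ⇑(ν one) =ᵐ[μX] fun _ => (1 : ℝ) := hunit one hone
  have h1 : ∀ᵐ x ∂μX, 0 ≤ ν (c • one - f) x := by
    apply hpos
    filter_upwards [Lp.coeFn_sub (c • one) f, Lp.coeFn_smul c one, hone, hf]
      with y e1 e2 e3 e4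
    rw [e1, Pi.sub_apply, e2, Pi.smul_apply, e3, smul_eq_mul, mul_one]
    linarith [(abs_le.1 e4).2]
  have h2 : ∀ᵐ x ∂μX, 0 ≤ ν (c • one + f) x := by
    apply hpos
    filter_upwards [Lp.coeFn_add (c • one) f, Lp.coeFn_smul c one, hone, hf]
      with y e1 e2 e3 e4
    rw [e1, Pi.add_apply, e2, Pi.smul_apply, e3, smul_eq_mul, mul_one]
    linarith [(abs_le.1 e4).1]
  rw [map_sub, _root_.map_smul] at h1
  rw [map_add, _root_.map_smul] at h2
  filter_upwards [h1, h2, Lp.coeFn_sub (c • ν one) (ν f),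
    Lp.coeFn_add (c • ν one) (ν f), Lp.coeFn_smul c (ν one), hν1]
    with x e1 e2 e3 e4 e5 e6
  rw [e3, Pi.sub_apply, e5, Pi.smul_apply, e6, smul_eq_mul, mul_one] at e1
  rw [e4, Pi.add_apply, e5, Pi.smul_apply, e6, smul_eq_mul, mul_one] at e2
  rw [abs_le]
  exact ⟨by linarith, by linarith⟩

lemma coe_smulsum {μ : Measure α} {ι : Type*} (t : Finset ι) (c : ι → ℝ)
    (g : ι → Lp ℝ ⊤ μ) :
    ⇑(∑ i ∈ t, c i • g i) =ᵐ[μ] fun x => ∑ i ∈ t, c i * g i x := by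
  classical
  induction t using Finset.induction_on with
  | empty => simp only [Finset.sum_empty]; exact Lp.coeFn_zero ℝ ⊤ μ
  | @insert a t ha ih =>
      rw [Finset.sum_insert ha]
      filter_upwards [Lp.coeFn_add (c a • g a) (∑ i ∈ t, c i • g i),
        Lp.coeFn_smul (c a) (g a), ih] with x e1 e2 e3
      rw [e1, Pi.add_apply, e2, Pi.smul_apply, smul_eq_mul, e3,
        Finset.sum_insert ha]

lemma integral_kerM
    (hpos : ∀ f : Lp ℝ ⊤ μY, (∀ᵐ y ∂μY, 0 ≤ f y) → ∀ᵐ x ∂μX, 0 ≤ ν f x)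
    (hunit : ∀ f : Lp ℝ ⊤ μY, ((f : _ → ℝ) =ᵐ[μY] fun _ => 1) →
      ((ν f : _ → ℝ) =ᵐ[μX] fun _ => 1))
    (hmass : ∀ Δ : Set α, MeasurableSet Δ →
      ∀ f : Lp ℝ ⊤ μY, ((f : _ → ℝ) =ᵐ[μY] Δ.indicator 1) →
      ∫ x, ν f x ∂μX = (μY Δ).toReal)
    (hlam : lam ≤ μX) {g : α → ℝ} (hg : Measurable g) {C : ℝ}
    (hC : ∀ᵐ y ∂μY, |g y| ≤ C) (gY : Lp ℝ ⊤ μY) (hgY : ⇑gY =ᵐ[μY] g) :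
    ∫ x, g x ∂(kerM ν hpos hmass hlam) = ∫ x, ν gY x ∂lam := by
  haveI : IsFiniteMeasure lam := isFiniteMeasure_of_le μX hlam
  set m := kerM ν hpos hmass hlam with hm
  haveI : IsFiniteMeasure m := isFiniteMeasure_of_le μY (kerM_le ν hpos hmass hlam)
  set D : ℝ := max C 0 with hD
  have hC' : ∀ᵐ y ∂μY, |g y| ≤ D := hC.mono fun y hy => le_trans hy (le_max_left _ _)
  have hgm : ∀ᵐ x ∂m, |g x| ≤ D :=
    hC'.filter_mono (Measure.absolutelyContinuous_of_le
      (kerM_le ν hpos hmass hlam)).ae_le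
  have hgint : Integrable g m :=
    (memLp_top_of_bound hg.aestronglyMeasurable D
      (hgm.mono fun x hx => by rwa [Real.norm_eq_abs])).integrable le_top
  have key : ∀ N : ℕ, |∫ x, g x ∂m - ∫ x, ν gY x ∂lam| ≤
      (1 / ((N : ℝ) + 1)) * ((m Set.univ).toReal + (lam Set.univ).toReal) := by
    intro N
    have hN : (0:ℝ) < (N:ℝ) + 1 := by positivity
    set fl : α → ℤ := fun x => ⌊g x * ((N:ℝ) + 1)⌋ with hfl
    have hflm : Measurable fl := (hg.mul measurable_const).floor
    set A : ℤ → Set α := fun k => fl ⁻¹' {k} with hA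
    have hAm : ∀ k, MeasurableSet (A k) := fun k => hflm (measurableSet_singleton k)
    set grid : Finset ℤ := Finset.Icc (-((⌈D⌉ + 1) * ((N:ℤ) + 1))) ((⌈D⌉ + 1) * ((N:ℤ) + 1))
      with hgrid
    set c : ℤ → ℝ := fun k => (k : ℝ) / ((N:ℝ) + 1) with hc
    set φ : α → ℝ := fun x => ∑ k ∈ grid, (A k).indicator (fun _ => c k) x with hφ
    have happrox : ∀ x, |g x| ≤ D → |φ x - g x| ≤ 1 / ((N:ℝ) + 1) := by
      intro x hx
      have hDnn : 0 ≤ D := le_max_right _ _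
      have hceil := Int.le_ceil D
      have habs := abs_le.1 hx
      have hfl_mem : fl x ∈ grid := by
        rw [hgrid, Finset.mem_Icc]
        constructor
        · apply Int.le_floor.2
          push_cast
          nlinarith [hceil, habs.1]
        · have h1 : (fl x : ℝ) ≤ g x * ((N:ℝ) + 1) := Int.floor_le _
          have h2 : g x * ((N:ℝ) + 1) ≤ (((⌈D⌉ + 1) * ((N:ℤ) + 1) : ℤ) : ℝ) := by
            push_cast
            nlinarith [hceil, habs.2]
          exact_mod_cast h1.trans h2
      have hφx : φ x = c (fl x) := by
        simp only [hφ]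
        rw [Finset.sum_eq_single (fl x)]
        · have : x ∈ A (fl x) := rfl
          simp [this]
        · intro k hk hne
          have hxk : x ∉ A k := fun h => hne (h.symm ▸ rfl)
          simp [Set.indicator_of_notMem hxk]
        · intro h; exact absurd hfl_mem h
      have h1 : (fl x : ℝ) ≤ g x * ((N:ℝ) + 1) := Int.floor_le _
      have h2 : g x * ((N:ℝ) + 1) < (fl x : ℝ) + 1 := Int.lt_floor_add_one _
      have e : c (fl x) - g x = ((fl x : ℝ) - g x * ((N:ℝ) + 1)) / ((N:ℝ) + 1) := by
        rw [hc]
        field_simp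
      rw [hφx, e, abs_div, abs_of_pos hN]
      gcongr
      rw [abs_le]
      constructor <;> linarith
    set Φ : Lp ℝ ⊤ μY := ∑ k ∈ grid, c k • ind μY (hAm k) with hΦ
    have hΦcoe : ⇑Φ =ᵐ[μY] φ := by
      have hae : ∀ᵐ y ∂μY, ∀ k ∈ (grid : Set ℤ),
          (ind μY (hAm k)) y = (A k).indicator (fun _ => (1:ℝ)) y :=
        (ae_ball_iff grid.countable_toSet).2 fun k _ => ind_coe μY (hAm k)
      filter_upwards [coe_smulsum grid c (fun k => ind μY (hAm k)), hae] with y e1 e2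
      rw [hΦ, e1, hφ]
      refine Finset.sum_congr rfl fun k hk => ?_
      rw [e2 k hk]
      by_cases hy : y ∈ A k <;> simp [hy]
    have hone : ∀ k, ∫ x, ν (ind μY (hAm k)) x ∂lam = (m (A k)).toReal := by
      intro k
      rw [hm, kerM_apply ν hpos hmass hlam (hAm k), ker_eq_ofReal ν hpos hlam (hAm k),
        ENNReal.toReal_ofReal]
      exact integral_nonneg_of_ae (ae_of_ae_muX hlam (nu_ind_nonneg ν hpos (hAm k)))
    have hφint : Integrable φ m :=
      integrable_finset_sum _ (fun k _ => (integrable_const (c k)).indicator (hAm k))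
    have hsumeq : ∫ x, φ x ∂m = ∫ x, ν Φ x ∂lam := by
      have hleft : ∫ x, φ x ∂m = ∑ k ∈ grid, c k * (m (A k)).toReal := by
        rw [hφ, integral_finset_sum _
          (fun k _ => (integrable_const (c k)).indicator (hAm k))]
        refine Finset.sum_congr rfl fun k hk => ?_
        rw [integral_indicator_const (c k) (hAm k), smul_eq_mul, mul_comm, measureReal_def]
      have hright : ∫ x, ν Φ x ∂lam = ∑ k ∈ grid, c k * (m (A k)).toReal := by
        rw [hΦ, map_sum]
        simp only [_root_.map_smul]
        rw [integral_congr_ae (ae_of_ae_muX hlam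
          (coe_smulsum grid c (fun k => ν (ind μY (hAm k)))))]
        rw [integral_finset_sum _
          (fun k _ => (integrable_nu ν hlam (ind μY (hAm k))).const_mul (c k))]
        exact Finset.sum_congr rfl fun k hk => by rw [integral_const_mul, hone k]
      rw [hleft, hright]
    have hleftbound : |∫ x, φ x ∂m - ∫ x, g x ∂m| ≤
        (1/((N:ℝ)+1)) * (m Set.univ).toReal := by
      rw [← integral_sub hφint hgint]
      have hb : ∀ᵐ x ∂m, ‖φ x - g x‖ ≤ 1/((N:ℝ)+1) :=
        hgm.mono fun x hx => by rw [Real.norm_eq_abs]; exact happrox x hx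
      simpa [Real.norm_eq_abs, measureReal_def] using
        norm_integral_le_of_norm_le_const (μ := m) (f := fun x => φ x - g x) hb
    have hdiffY : ∀ᵐ y ∂μY, |(Φ - gY) y| ≤ 1/((N:ℝ)+1) := by
      filter_upwards [Lp.coeFn_sub Φ gY, hΦcoe, hgY, hC'] with y e1 e2 e3 e4
      rw [e1, Pi.sub_apply, e2, e3]
      exact happrox y e4
    have hdiffX : ∀ᵐ x ∂μX, |ν (Φ - gY) x| ≤ 1/((N:ℝ)+1) :=
      nu_abs_le ν hpos hunit _ hdiffY
    have hrightbound : |∫ x, ν Φ x ∂lam - ∫ x, ν gY x ∂lam| ≤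
        (1/((N:ℝ)+1)) * (lam Set.univ).toReal := by
      have e0 : ∫ x, ν Φ x ∂lam - ∫ x, ν gY x ∂lam = ∫ x, ν (Φ - gY) x ∂lam := by
        rw [map_sub]
        rw [integral_congr_ae (ae_of_ae_muX hlam (Lp.coeFn_sub (ν Φ) (ν gY)))]
        exact (integral_sub (integrable_nu ν hlam Φ) (integrable_nu ν hlam gY)).symm
      rw [e0]
      have hb : ∀ᵐ x ∂lam, ‖ν (Φ - gY) x‖ ≤ 1/((N:ℝ)+1) :=
        (ae_of_ae_muX hlam hdiffX).mono fun x hx => by rwa [Real.norm_eq_abs]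
      simpa [Real.norm_eq_abs, measureReal_def] using
        norm_integral_le_of_norm_le_const (μ := lam) hb
    have habc : |∫ x, g x ∂m - ∫ x, ν gY x ∂lam| ≤
        |∫ x, g x ∂m - ∫ x, φ x ∂m| + |∫ x, φ x ∂m - ∫ x, ν gY x ∂lam| :=
      abs_sub_le _ _ _
    rw [← hsumeq] at hrightbound
    have hlb' : |∫ x, g x ∂m - ∫ x, φ x ∂m| ≤ (1/((N:ℝ)+1)) * (m Set.univ).toReal := by
      rw [abs_sub_comm]
      exact hleftbound
    have := habc.trans (add_le_add hlb' hrightbound)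
    calc |∫ x, g x ∂m - ∫ x, ν gY x ∂lam|
        ≤ 1/((N:ℝ)+1) * (m Set.univ).toReal + 1/((N:ℝ)+1) * (lam Set.univ).toReal :=
          this
      _ = (1 / ((N : ℝ) + 1)) * ((m Set.univ).toReal + (lam Set.univ).toReal) := by
          ring
  have htend : Tendsto (fun N : ℕ => (1 / ((N:ℝ) + 1)) *
      ((m Set.univ).toReal + (lam Set.univ).toReal)) atTop (𝓝 0) := by
    have h1 := (tendsto_const_div_atTop_nhds_zero_nat
      ((m Set.univ).toReal + (lam Set.univ).toReal)).comp (tendsto_add_atTop_nat 1)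
    refine h1.congr fun N => ?_
    simp only [Function.comp_apply]
    push_cast
    ring
  have h0 : |∫ x, g x ∂m - ∫ x, ν gY x ∂lam| ≤ 0 :=
    ge_of_tendsto htend (Eventually.of_forall key)
  exact sub_eq_zero.1 (abs_eq_zero.1 (le_antisymm h0 (abs_nonneg _)))

end basic

end DSKaux

open DSKaux


open MeasureTheory

/-- If `ν : L^∞(μ_Y) → L^∞(μ_X)` is a doubly stochastic kernel between compactly
supported Borel probability measures on `ℝⁿ` fixing the coordinate projections, then
every finite decomposition `μ_X = Σⱼ λⱼ` is matched by the decomposition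
`μ_Y = Σⱼ λⱼ'`, `λⱼ'(Δ) = ∫ ν(1_Δ) dλⱼ`, with the same masses and first moments;
in particular `μ_X ≺ μ_Y` in the decomposition sense. -/
theorem doubly_stochastic_kernel_gives_decomposition_majorization {n : ℕ}
    (μX μY : Measure (EuclideanSpace ℝ (Fin n)))
    [IsProbabilityMeasure μX] [IsProbabilityMeasure μY] [μX.Regular] [μY.Regular]
    (hμXc : ∃ K, IsCompact K ∧ μX Kᶜ = 0) (hμYc : ∃ K, IsCompact K ∧ μY Kᶜ = 0)
    (ν : Lp ℝ ⊤ μY →ₗ[ℝ] Lp ℝ ⊤ μX)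
    (hpos : ∀ f : Lp ℝ ⊤ μY, (∀ᵐ y ∂μY, 0 ≤ f y) → ∀ᵐ x ∂μX, 0 ≤ ν f x)
    (hunit : ∀ f : Lp ℝ ⊤ μY, ((f : _ → ℝ) =ᵐ[μY] fun _ => 1) →
      ((ν f : _ → ℝ) =ᵐ[μX] fun _ => 1))
    (hmass : ∀ Δ : Set (EuclideanSpace ℝ (Fin n)), MeasurableSet Δ →
      ∀ f : Lp ℝ ⊤ μY, ((f : _ → ℝ) =ᵐ[μY] Δ.indicator 1) →
      ∫ x, ν f x ∂μX = (μY Δ).toReal)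
    (hfix : ∀ j : Fin n, ∀ f : Lp ℝ ⊤ μY, ((f : _ → ℝ) =ᵐ[μY] fun x => x j) →
      ((ν f : _ → ℝ) =ᵐ[μX] fun x => x j)) :
    ∀ (m : ℕ) (lam : Fin m → Measure (EuclideanSpace ℝ (Fin n))),
      (∑ j, lam j) = μX →
      ∃ lam' : Fin m → Measure (EuclideanSpace ℝ (Fin n)),
        (∀ (j : Fin m) (Δ : Set (EuclideanSpace ℝ (Fin n))), MeasurableSet Δ →
          ∀ f : Lp ℝ ⊤ μY, ((f : _ → ℝ) =ᵐ[μY] Δ.indicator 1) →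
            lam' j Δ = ENNReal.ofReal (∫ x, ν f x ∂(lam j))) ∧
        (∑ j, lam' j) = μY ∧
        (∀ j, lam' j Set.univ = lam j Set.univ) ∧
        (∀ j, ∀ i : Fin n, ∫ x, x i ∂(lam' j) = ∫ x, x i ∂(lam j)) := by
  intro m lam hsum
  have hlam : ∀ j, lam j ≤ μX := fun j =>
    Measure.le_iff.2 fun s _ => by
      rw [← hsum, Measure.finset_sum_apply]
      exact Finset.single_le_sum (f := fun k : Fin m => lam k s) (fun k _ => zero_le) (Finset.mem_univ j)
  refine ⟨fun j => kerM ν hpos hmass (hlam j), ?_, ?_, ?_, ?_⟩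
  · intro j Δ hΔ f hf
    have hfeq : f = ind μY hΔ := Lp.ext (hf.trans (ind_coe μY hΔ).symm)
    rw [hfeq, kerM_apply ν hpos hmass (hlam j) hΔ, ker_eq_ofReal ν hpos (hlam j) hΔ]
  · refine Measure.ext fun s hs => ?_
    rw [Measure.finset_sum_apply]
    have h1 : ∀ j : Fin m, kerM ν hpos hmass (hlam j) s =
        ∫⁻ x, ENNReal.ofReal (ν (ind μY hs) x) ∂(lam j) := fun j =>
      kerM_apply ν hpos hmass (hlam j) hs
    rw [Finset.sum_congr rfl (fun j _ => h1 j), ← lintegral_finset_sum_measure, hsum]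
    exact ker_muX ν hpos hmass hs
  · intro j
    haveI := isFiniteMeasure_of_le μX (hlam j)
    rw [kerM_apply ν hpos hmass (hlam j) MeasurableSet.univ]
    have hnu1 : ⇑(ν (ind μY MeasurableSet.univ)) =ᵐ[μX] fun _ => (1 : ℝ) :=
      hunit _ ((ind_coe μY MeasurableSet.univ).trans (by rw [Set.indicator_univ]))
    have h2 : (fun x => ENNReal.ofReal (ν (ind μY MeasurableSet.univ) x)) =ᵐ[lam j]
        fun _ => (1 : ENNReal) := by
      filter_upwards [ae_of_ae_muX (hlam j) hnu1] with x e1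
      rw [e1]
      simp
    have : ker ν (lam j) MeasurableSet.univ =
        ∫⁻ _, (1 : ENNReal) ∂(lam j) := lintegral_congr_ae h2
    rw [this, lintegral_one]
  · intro j i
    haveI := isFiniteMeasure_of_le μX (hlam j)
    obtain ⟨K, hKc, hK0⟩ := hμYc
    obtain ⟨R, hR⟩ := hKc.isBounded.subset_closedBall 0
    have hcoord : ∀ y : EuclideanSpace ℝ (Fin n), |y i| ≤ ‖y‖ := by
      intro y
      rw [EuclideanSpace.norm_eq]
      calc |y i| = Real.sqrt (‖y i‖ ^ 2) := by
            rw [Real.sqrt_sq_eq_abs, Real.norm_eq_abs, abs_abs]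
        _ ≤ Real.sqrt (∑ k, ‖y k‖ ^ 2) :=
            Real.sqrt_le_sqrt (Finset.single_le_sum
              (fun k _ => sq_nonneg ‖y k‖) (Finset.mem_univ i))
    have haeK : ∀ᵐ y ∂μY, y ∈ K := by
      rw [ae_iff]
      exact hK0
    have hbound : ∀ᵐ y ∂μY, |y i| ≤ |R| := haeK.mono fun y hy =>
      (hcoord y).trans ((mem_closedBall_zero_iff.1 (hR hy)).trans (le_abs_self R))
    have hgmeas : Measurable (fun x : EuclideanSpace ℝ (Fin n) => x i) :=
      (EuclideanSpace.proj (𝕜 := ℝ) i).continuous.measurable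
    have hg : MemLp (fun x : EuclideanSpace ℝ (Fin n) => x i) ⊤ μY :=
      memLp_top_of_bound hgmeas.aestronglyMeasurable |R|
        (hbound.mono fun y hy => by rwa [Real.norm_eq_abs])
    have hgYcoe : ⇑(hg.toLp _) =ᵐ[μY] fun x : EuclideanSpace ℝ (Fin n) => x i :=
      hg.coeFn_toLp
    rw [integral_kerM ν hpos hunit hmass (hlam j) hgmeas hbound (hg.toLp _) hgYcoe]
    exact integral_congr_ae (ae_of_ae_muX (hlam j) (hfix i (hg.toLp _) hgYcoe))
end
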